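/- Let n ≥ 1 and 1 ≤ k ≤ n. The set Γ_k := {λ ∈ ℝⁿ : S_j(λ) ≥ 0 for all j = 1,…,k} is a closed convex cone with vertex at the origin: Γ_k is closed, and if λ, μ ∈ Γ_k and s, t ≥ 0, then sλ + tμ ∈ Γ_k. -/

import Mathlib

open MeasureTheory Metric Filter Finset Topology Asymptotics

noncomputable section

/-- The `j`-th elementary symmetric function `S_j` on `ℝⁿ`. -/
def esymm (n j : ℕ) (lam : Fin n → ℝ) : ℝ :=
  ∑ s ∈ Finset.powersetCard j (Finset.univ : Finset (Fin n)), ∏ i ∈ s, lam i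

/-- The eigenvalue vector of a symmetric matrix (junk value `0` if not symmetric). -/
def eigs (n : ℕ) (A : Matrix (Fin n) (Fin n) ℝ) : Fin n → ℝ :=
  if h : A.IsHermitian then h.eigenvalues else 0

/-- The cone `Γ_k = {λ : S_j(λ) ≥ 0, j = 1,…,k}`. -/
def Gamma (n k : ℕ) : Set (Fin n → ℝ) :=
  {lam | ∀ j, 1 ≤ j → j ≤ k → 0 ≤ esymm n j lam}

/-- A quadratic polynomial with constant Hessian `A`. -/
def quadPoly (n : ℕ) (c : ℝ) (b : Fin n → ℝ) (A : Matrix (Fin n) (Fin n) ℝ)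
    (x : EuclideanSpace ℝ (Fin n)) : ℝ :=
  c + ∑ i, b i * x i + (1 / 2) * ∑ i, ∑ j, A i j * x i * x j

/-- Viscosity definition of `k`-convexity on an open set `Ω`. -/
def KConvex (n k : ℕ) (Ω : Set (EuclideanSpace ℝ (Fin n)))
    (u : EuclideanSpace ℝ (Fin n) → EReal) : Prop :=
  UpperSemicontinuousOn u Ω ∧
  (∀ x, u x ≠ ⊤) ∧
  (∀ x ∈ Ω, ∃ y ∈ connectedComponentIn Ω x, u y ≠ ⊥) ∧
  ∀ (c : ℝ) (b : Fin n → ℝ) (A : Matrix (Fin n) (Fin n) ℝ), A.IsHermitian →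
    ∀ x₀ ∈ Ω, u x₀ ≠ ⊥ →
      IsLocalMaxOn (fun x => u x - (quadPoly n c b A x : EReal)) Ω x₀ →
      eigs n A ∈ Gamma n k

/-- Second partial derivatives (Hessian matrix) of a function on `ℝⁿ`. -/
def hess (n : ℕ) (f : EuclideanSpace ℝ (Fin n) → ℝ) (x : EuclideanSpace ℝ (Fin n)) :
    Matrix (Fin n) (Fin n) ℝ :=
  Matrix.of fun i j =>
    fderiv ℝ (fun y => fderiv ℝ f y (EuclideanSpace.single j 1)) x (EuclideanSpace.single i 1)
namespace GammaAux

open Polynomial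

variable {n k : ℕ}

lemma esymm_eq_coeff' (ν : Fin n → ℝ) {j : ℕ} (hj : j ≤ n) :
    (∏ i : Fin n, (X + C (ν i))).coeff (n - j) = esymm n j ν := by
  rw [Finset.prod_X_add_C_coeff univ ν (by simpa using Nat.sub_le n j)]
  simp [esymm, card_univ, Nat.sub_sub_self hj]

lemma esymm_zero_eq (ν : Fin n → ℝ) : esymm n 0 ν = 1 := by simp [esymm]

lemma esymm_smul (s : ℝ) (ν : Fin n → ℝ) (j : ℕ) :
    esymm n j (s • ν) = s ^ j * esymm n j ν := by
  unfold esymm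
  rw [Finset.mul_sum]
  refine Finset.sum_congr rfl fun A hA => ?_
  rw [Finset.mem_powersetCard] at hA
  have : ∀ i ∈ A, (s • ν) i = s * ν i := fun i _ => rfl
  rw [Finset.prod_congr rfl this, Finset.prod_mul_distrib, Finset.prod_const, hA.2]

lemma continuous_esymm (j : ℕ) : Continuous fun ν : Fin n → ℝ => esymm n j ν := by
  unfold esymm
  exact continuous_finset_sum _ fun A _ => continuous_finset_prod _ fun i _ => continuous_apply i

/-- The real polynomial `∏ (X + ν i)`. -/
def W (ν : Fin n → ℝ) : ℝ[X] := ∏ i : Fin n, (X + C (ν i))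

lemma esymm_eq_coeff (ν : Fin n → ℝ) {j : ℕ} (hj : j ≤ n) :
    (W ν).coeff (n - j) = esymm n j ν := esymm_eq_coeff' ν hj

lemma monic_W (ν : Fin n → ℝ) : (W ν).Monic :=
  monic_prod_of_monic _ _ fun i _ => monic_X_add_C _

lemma natDegree_W (ν : Fin n → ℝ) : (W ν).natDegree = n := by
  rw [W, natDegree_prod _ _ (fun i _ => X_add_C_ne_zero (ν i))]
  simp [natDegree_X_add_C]

lemma card_roots_W (ν : Fin n → ℝ) : Multiset.card (W ν).roots = n := by
  have h : W ν = ((univ.val.map fun i => -ν i).map fun a => X - C a).prod := by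
    rw [Multiset.map_map, W, Finset.prod_eq_multiset_prod]
    congr 1
    refine Multiset.map_congr rfl fun i _ => ?_
    simp [sub_neg_eq_add]
  rw [h, roots_multiset_prod_X_sub_C]
  simp

lemma iterate_rr (p : ℝ[X]) (h : Multiset.card p.roots = p.natDegree) {m : ℕ}
    (hm : m ≤ p.natDegree) :
    (derivative^[m] p).natDegree = p.natDegree - m ∧
      Multiset.card (derivative^[m] p).roots = p.natDegree - m := by
  induction m with
  | zero => exact ⟨by simp, by simp [h]⟩
  | succ m ih =>
    obtain ⟨hd, hr⟩ := ih (by omega)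
    rw [Function.iterate_succ_apply']
    set q := derivative^[m] p with hq
    have h1 : (derivative q).natDegree ≤ p.natDegree - (m + 1) := by
      have := natDegree_derivative_le q
      omega
    have h2 : Multiset.card q.roots ≤ Multiset.card (derivative q).roots + 1 :=
      card_roots_le_derivative q
    have h3 : Multiset.card (derivative q).roots ≤ (derivative q).natDegree :=
      card_roots' _
    omega

variable (n k) in
/-- `R ν = derivative^[n-k] (∏ (X + ν i))`, a degree-`k` real-rooted polynomial. -/
def Rp (ν : Fin n → ℝ) : ℝ[X] := derivative^[n - k] (W ν)

lemma natDegree_Rp (hkn : k ≤ n) (ν : Fin n → ℝ) : (Rp n k ν).natDegree = k := by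
  have := (iterate_rr (W ν) ((card_roots_W ν).trans (natDegree_W ν).symm)
    (m := n - k) (by rw [natDegree_W]; omega)).1
  rw [Rp, this, natDegree_W]; omega

lemma card_roots_Rp (hkn : k ≤ n) (ν : Fin n → ℝ) :
    Multiset.card (Rp n k ν).roots = k := by
  have := (iterate_rr (W ν) ((card_roots_W ν).trans (natDegree_W ν).symm)
    (m := n - k) (by rw [natDegree_W]; omega)).2
  rw [Rp, this, natDegree_W]; omega

lemma Rp_ne_zero (hk1 : 1 ≤ k) (hkn : k ≤ n) (ν : Fin n → ℝ) : Rp n k ν ≠ 0 := by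
  intro h
  have := natDegree_Rp hkn ν
  rw [h, natDegree_zero] at this
  omega

variable (n k) in
/-- coefficient constants -/
def cc (j : ℕ) : ℕ := (n - j).descFactorial (n - k)

lemma cc_pos (hkn : k ≤ n) {j : ℕ} (hj : j ≤ k) : 0 < cc n k j := by
  rw [cc]
  refine Nat.pos_of_ne_zero fun h0 => ?_
  rw [Nat.descFactorial_eq_zero_iff_lt] at h0
  omega

lemma coeff_Rp (hkn : k ≤ n) (ν : Fin n → ℝ) {j : ℕ} (hj : j ≤ k) :
    (Rp n k ν).coeff (k - j) = (cc n k j : ℝ) * esymm n j ν := by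
  rw [Rp, coeff_iterate_derivative]
  have h1 : k - j + (n - k) = n - j := by omega
  rw [h1, esymm_eq_coeff ν (by omega : j ≤ n), cc, nsmul_eq_mul]

lemma eval_Rp (hk1 : 1 ≤ k) (hkn : k ≤ n) (ν : Fin n → ℝ) (t : ℝ) :
    eval t (Rp n k ν) =
      ∑ j ∈ range (k + 1), (cc n k j : ℝ) * esymm n j ν * t ^ (k - j) := by
  rw [eval_eq_sum_range' (show (Rp n k ν).natDegree < k + 1 by rw [natDegree_Rp hkn]; omega)]
  rw [← Finset.sum_range_reflect]
  refine Finset.sum_congr rfl fun j hj => ?_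
  rw [Finset.mem_range] at hj
  have h1 : k + 1 - 1 - j = k - j := by omega
  rw [h1, coeff_Rp hkn ν (by omega)]

lemma eval_Rp_pos_of_strict (hk1 : 1 ≤ k) (hkn : k ≤ n) (ν : Fin n → ℝ)
    (hν : ∀ j, 1 ≤ j → j ≤ k → 0 < esymm n j ν) {t : ℝ} (ht : 0 ≤ t) :
    0 < eval t (Rp n k ν) := by
  rw [eval_Rp hk1 hkn]
  refine Finset.sum_pos' (fun j hj => ?_) ⟨k, by simp, ?_⟩
  · rw [Finset.mem_range] at hj
    rcases Nat.eq_zero_or_pos j with h | h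
    · subst h; rw [esymm_zero_eq]; positivity
    · have := hν j h (by omega)
      positivity
  · have := hν k hk1 le_rfl
    have := cc_pos (n := n) hkn (le_refl k)
    simp only [Nat.sub_self, pow_zero, mul_one]
    positivity

lemma eval_Rp_pos_of_nonneg (hk1 : 1 ≤ k) (hkn : k ≤ n) (ν : Fin n → ℝ)
    (hν : ∀ j, 1 ≤ j → j ≤ k → 0 ≤ esymm n j ν) {t : ℝ} (ht : 0 < t) :
    0 < eval t (Rp n k ν) := by
  rw [eval_Rp hk1 hkn]
  refine Finset.sum_pos' (fun j hj => ?_) ⟨0, by simp [hk1], ?_⟩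
  · rw [Finset.mem_range] at hj
    rcases Nat.eq_zero_or_pos j with h | h
    · subst h; rw [esymm_zero_eq]; positivity
    · have := hν j h (by omega)
      positivity
  · rw [esymm_zero_eq]
    have := cc_pos (n := n) hkn (Nat.zero_le k)
    positivity

/-- evaluation of the complexification of a real-rooted real polynomial at a
non-real point is nonzero. -/
lemma eval_map_ne_zero_of_im (p : ℝ[X]) (hp : p ≠ 0)
    (hcard : Multiset.card p.roots = p.natDegree) {z : ℂ} (hz : z.im ≠ 0) :
    (p.map (algebraMap ℝ ℂ)).eval z ≠ 0 := by
  have hfact := C_leadingCoeff_mul_prod_multiset_X_sub_C (p := p) hcard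
  have : p.map (algebraMap ℝ ℂ) =
      C ((p.leadingCoeff : ℝ) : ℂ) * (p.roots.map fun a => X - C ((a : ℝ) : ℂ)).prod := by
    conv_lhs => rw [← hfact]
    rw [Polynomial.map_mul, map_C, Polynomial.map_multiset_prod, Multiset.map_map]
    congr 2
    refine Multiset.map_congr rfl fun a _ => ?_
    simp
  rw [this, eval_mul, eval_C, eval_multiset_prod, Multiset.map_map]
  refine mul_ne_zero (by simpa using leadingCoeff_ne_zero.mpr hp) ?_
  refine Multiset.prod_ne_zero fun h0 => ?_
  rw [Multiset.mem_map] at h0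
  obtain ⟨a, _, ha⟩ := h0
  simp only [Function.comp_apply, eval_sub, eval_X, eval_C] at ha
  have : (z - (a : ℂ)).im = z.im := by simp
  rw [ha] at this
  simp at this
  exact hz this.symm

end GammaAux
namespace GammaAux

open Polynomial

variable {n k : ℕ} (lam mu : Fin n → ℝ)

variable (n) in
/-- mixed elementary symmetric function, complexified -/
def Ecx (j : ℕ) (b c : ℂ) : ℂ :=
  ∑ A ∈ powersetCard j (univ : Finset (Fin n)),
    ∏ i ∈ A, (c * (lam i : ℂ) + b * (mu i : ℂ))

lemma Ecx_real (j : ℕ) (b c : ℝ) :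
    Ecx n lam mu j (b : ℂ) (c : ℂ) = ((esymm n j (c • lam + b • mu) : ℝ) : ℂ) := by
  unfold Ecx esymm
  push_cast
  refine Finset.sum_congr rfl fun A _ => Finset.prod_congr rfl fun i _ => ?_
  have : (c • lam + b • mu) i = c * lam i + b * mu i := rfl
  rw [this]
  push_cast
  ring

lemma Ecx_smul (j : ℕ) (r b c : ℂ) :
    Ecx n lam mu j (r * b) (r * c) = r ^ j * Ecx n lam mu j b c := by
  unfold Ecx
  rw [Finset.mul_sum]
  refine Finset.sum_congr rfl fun A hA => ?_
  rw [Finset.mem_powersetCard] at hA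
  calc ∏ i ∈ A, (r * c * (lam i : ℂ) + r * b * (mu i : ℂ))
      = ∏ i ∈ A, (r * (c * (lam i : ℂ) + b * (mu i : ℂ))) :=
        Finset.prod_congr rfl fun i _ => by ring
    _ = (∏ _i ∈ A, r) * ∏ i ∈ A, (c * (lam i : ℂ) + b * (mu i : ℂ)) :=
        Finset.prod_mul_distrib
    _ = r ^ j * _ := by rw [Finset.prod_const, hA.2]

variable (n k) in
/-- The Gårding polynomial as a function on `ℂ³`. -/
def pf (a b c : ℂ) : ℂ :=
  ∑ j ∈ range (k + 1), (cc n k j : ℂ) * Ecx n lam mu j b c * a ^ (k - j)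

lemma pf_eq_sum_coeff (hkn : k ≤ n) (b c : ℝ) (z : ℂ) :
    pf n k lam mu z (b : ℂ) (c : ℂ) =
      ∑ i ∈ range (k + 1), (((Rp n k (c • lam + b • mu)).coeff i : ℝ) : ℂ) * z ^ i := by
  rw [← Finset.sum_range_reflect]
  unfold pf
  refine Finset.sum_congr rfl fun j hj => ?_
  rw [Finset.mem_range] at hj
  have h1 : k + 1 - 1 - j = k - j := by omega
  rw [h1, coeff_Rp hkn _ (by omega : j ≤ k), Ecx_real]
  push_cast
  ring

lemma pf_eq_eval_map (hkn : k ≤ n) (b c : ℝ) (z : ℂ) :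
    pf n k lam mu z (b : ℂ) (c : ℂ) =
      ((Rp n k (c • lam + b • mu)).map (algebraMap ℝ ℂ)).eval z := by
  rw [pf_eq_sum_coeff lam mu hkn, eval_eq_sum_range'
    (show ((Rp n k (c • lam + b • mu)).map (algebraMap ℝ ℂ)).natDegree < k + 1 by
      rw [natDegree_map]
      rw [natDegree_Rp hkn]
      omega)]
  refine Finset.sum_congr rfl fun i _ => ?_
  rw [coeff_map]
  rfl

lemma pf_real (hk1 : 1 ≤ k) (hkn : k ≤ n) (a b c : ℝ) :
    pf n k lam mu (a : ℂ) (b : ℂ) (c : ℂ) =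
      ((eval a (Rp n k (c • lam + b • mu)) : ℝ) : ℂ) := by
  rw [pf_eq_sum_coeff lam mu hkn, eval_eq_sum_range'
    (show (Rp n k (c • lam + b • mu)).natDegree < k + 1 by rw [natDegree_Rp hkn]; omega)]
  push_cast
  rfl

lemma pf_smul (hkn : k ≤ n) (r a b c : ℂ) :
    pf n k lam mu (r * a) (r * b) (r * c) = r ^ k * pf n k lam mu a b c := by
  unfold pf
  rw [Finset.mul_sum]
  refine Finset.sum_congr rfl fun j hj => ?_
  rw [Finset.mem_range] at hj
  rw [Ecx_smul, mul_pow]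
  have : r ^ j * r ^ (k - j) = r ^ k := by
    rw [← pow_add]
    congr 1
    omega
  calc (cc n k j : ℂ) * (r ^ j * Ecx n lam mu j b c) * (r ^ (k - j) * a ^ (k - j))
      = (r ^ j * r ^ (k - j)) * ((cc n k j : ℂ) * Ecx n lam mu j b c * a ^ (k - j)) := by ring
    _ = r ^ k * _ := by rw [this]

lemma pf_ne_zero_of_im (hk1 : 1 ≤ k) (hkn : k ≤ n) (b c : ℝ) {z : ℂ} (hz : z.im ≠ 0) :
    pf n k lam mu z (b : ℂ) (c : ℂ) ≠ 0 := by
  rw [pf_eq_eval_map lam mu hkn]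
  exact eval_map_ne_zero_of_im _ (Rp_ne_zero hk1 hkn _)
    ((card_roots_Rp hkn _).trans (natDegree_Rp hkn _).symm) hz

lemma pf_root_real (hk1 : 1 ≤ k) (hkn : k ≤ n) (b c : ℝ) {z : ℂ}
    (h0 : pf n k lam mu z (b : ℂ) (c : ℂ) = 0) : z.im = 0 := by
  by_contra h
  exact pf_ne_zero_of_im lam mu hk1 hkn b c h h0

variable (n k) in
/-- restriction of the Gårding polynomial to a complex line, as a polynomial -/
def fm (a b c d e f : ℂ) : ℂ[X] :=
  ∑ j ∈ range (k + 1), Polynomial.C ((cc n k j : ℂ)) *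
    (∑ A ∈ powersetCard j (univ : Finset (Fin n)), ∏ i ∈ A,
      (Polynomial.C (c * (lam i : ℂ) + b * (mu i : ℂ)) +
        Polynomial.C (f * (lam i : ℂ) + e * (mu i : ℂ)) * X)) *
    (Polynomial.C a + Polynomial.C d * X) ^ (k - j)

lemma fm_eval (a b c d e f τ : ℂ) :
    eval τ (fm n k lam mu a b c d e f) =
      pf n k lam mu (a + τ * d) (b + τ * e) (c + τ * f) := by
  unfold fm pf Ecx
  rw [eval_finset_sum]
  refine Finset.sum_congr rfl fun j _ => ?_
  rw [eval_mul, eval_mul, eval_C, eval_pow, eval_add, eval_C, eval_mul, eval_C, eval_X,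
    eval_finset_sum]
  rw [show a + d * τ = a + τ * d by ring]
  congr 1
  congr 1
  refine Finset.sum_congr rfl fun A _ => ?_
  rw [eval_prod]
  refine Finset.prod_congr rfl fun i _ => ?_
  rw [eval_add, eval_C, eval_mul, eval_C, eval_X]
  ring

lemma natDegree_lin (p q : ℂ) : (Polynomial.C p + Polynomial.C q * X).natDegree ≤ 1 := by
  refine (natDegree_add_le _ _).trans ?_
  simp only [natDegree_C, max_le_iff]
  constructor
  · omega
  · exact (natDegree_mul_le).trans (by simp)

lemma coeff_lin_prod (g h : Fin n → ℂ) (A : Finset (Fin n)) :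
    (∏ i ∈ A, (Polynomial.C (g i) + Polynomial.C (h i) * X)).natDegree ≤ A.card ∧
      (∏ i ∈ A, (Polynomial.C (g i) + Polynomial.C (h i) * X)).coeff A.card = ∏ i ∈ A, h i := by
  classical
  induction A using Finset.induction_on with
  | empty => simp
  | @insert i A hiA ih =>
    rw [Finset.prod_insert hiA, Finset.prod_insert hiA, Finset.card_insert_of_notMem hiA]
    set P := ∏ j ∈ A, (Polynomial.C (g j) + Polynomial.C (h j) * X) with hP
    constructor
    · refine (natDegree_mul_le).trans ?_
      have := natDegree_lin (g i) (h i)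
      omega
    · have hdecomp : (Polynomial.C (g i) + Polynomial.C (h i) * X) * P =
          Polynomial.C (g i) * P + Polynomial.C (h i) * (X * P) := by ring
      rw [hdecomp, coeff_add, coeff_C_mul, coeff_C_mul, coeff_X_mul,
        coeff_eq_zero_of_natDegree_lt (by omega : P.natDegree < A.card + 1), ih.2]
      ring

lemma coeff_lin_pow (p q : ℂ) (m : ℕ) :
    ((Polynomial.C p + Polynomial.C q * X) ^ m).natDegree ≤ m ∧
      ((Polynomial.C p + Polynomial.C q * X) ^ m).coeff m = q ^ m := by
  induction m with
  | zero => simp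
  | succ m ih =>
    rw [pow_succ]
    constructor
    · refine (natDegree_mul_le).trans ?_
      have := natDegree_lin p q
      omega
    · have hdecomp : (Polynomial.C p + Polynomial.C q * X) ^ m *
          (Polynomial.C p + Polynomial.C q * X) =
          Polynomial.C p * ((Polynomial.C p + Polynomial.C q * X) ^ m) +
            Polynomial.C q * (X * (Polynomial.C p + Polynomial.C q * X) ^ m) := by ring
      rw [hdecomp, coeff_add, coeff_C_mul, coeff_C_mul, coeff_X_mul,
        coeff_eq_zero_of_natDegree_lt (by omega :
          ((Polynomial.C p + Polynomial.C q * X) ^ m).natDegree < m + 1), ih.2]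
      rw [pow_succ]
      ring

lemma fm_natDegree_le (a b c d e f : ℂ) :
    (fm n k lam mu a b c d e f).natDegree ≤ k := by
  unfold fm
  refine natDegree_sum_le_of_forall_le _ _ fun j hj => ?_
  rw [Finset.mem_range] at hj
  refine (natDegree_mul_le).trans ?_
  have h1 : (Polynomial.C ((cc n k j : ℂ)) *
      (∑ A ∈ powersetCard j (univ : Finset (Fin n)), ∏ i ∈ A,
        (Polynomial.C (c * (lam i : ℂ) + b * (mu i : ℂ)) +
          Polynomial.C (f * (lam i : ℂ) + e * (mu i : ℂ)) * X))).natDegree ≤ j := by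
    refine (natDegree_mul_le).trans ?_
    have h2 : (∑ A ∈ powersetCard j (univ : Finset (Fin n)), ∏ i ∈ A,
        (Polynomial.C (c * (lam i : ℂ) + b * (mu i : ℂ)) +
          Polynomial.C (f * (lam i : ℂ) + e * (mu i : ℂ)) * X)).natDegree ≤ j := by
      refine natDegree_sum_le_of_forall_le _ _ fun A hA => ?_
      rw [Finset.mem_powersetCard] at hA
      exact hA.2 ▸ (coeff_lin_prod _ _ _).1
    simp only [natDegree_C]
    omega
  have h3 := (coeff_lin_pow a d (k - j)).1
  omega

lemma fm_coeff_k (a b c d e f : ℂ) :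
    (fm n k lam mu a b c d e f).coeff k = pf n k lam mu d e f := by
  unfold fm pf
  rw [finset_sum_coeff]
  refine Finset.sum_congr rfl fun j hj => ?_
  rw [Finset.mem_range] at hj
  set G := ∑ A ∈ powersetCard j (univ : Finset (Fin n)), ∏ i ∈ A,
    (Polynomial.C (c * (lam i : ℂ) + b * (mu i : ℂ)) +
      Polynomial.C (f * (lam i : ℂ) + e * (mu i : ℂ)) * X) with hG
  have hGdeg : G.natDegree ≤ j := by
    refine natDegree_sum_le_of_forall_le _ _ fun A hA => ?_
    rw [Finset.mem_powersetCard] at hA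
    exact hA.2 ▸ (coeff_lin_prod _ _ _).1
  have hGcoeff : G.coeff j = Ecx n lam mu j e f := by
    rw [hG, finset_sum_coeff]
    refine Finset.sum_congr rfl fun A hA => ?_
    rw [Finset.mem_powersetCard] at hA
    rw [← hA.2]
    exact (coeff_lin_prod _ _ _).2
  have hCG : (Polynomial.C ((cc n k j : ℂ)) * G).natDegree ≤ j := by
    refine (natDegree_mul_le).trans ?_
    simp only [natDegree_C]
    omega
  have hkj : j + (k - j) = k := by omega
  have hmain := coeff_mul_add_eq_of_natDegree_le hCG (coeff_lin_pow a d (k - j)).1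
  rw [hkj] at hmain
  rw [hmain, coeff_C_mul, hGcoeff, (coeff_lin_pow a d (k - j)).2]

end GammaAux
namespace GammaAux

open Polynomial

lemma norm_multiset_prod' (s : Multiset ℂ) : ‖s.prod‖ = (s.map fun z => ‖z‖).prod := by
  induction s using Multiset.induction_on with
  | empty => simp
  | @cons a s ih => simp [norm_mul, ih]

lemma pow_card_le_prod_multiset (s : Multiset ℝ) (a : ℝ) (ha : 0 ≤ a)
    (h : ∀ x ∈ s, a ≤ x) : a ^ Multiset.card s ≤ s.prod := by
  induction s using Multiset.induction_on with
  | empty => simp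
  | @cons b s ih =>
    rw [Multiset.prod_cons, Multiset.card_cons, pow_succ']
    have hb := h b (Multiset.mem_cons_self b s)
    have hs := ih fun x hx => h x (Multiset.mem_cons_of_mem hx)
    have h1 : (0:ℝ) ≤ a ^ Multiset.card s := by positivity
    calc a * a ^ Multiset.card s ≤ b * a ^ Multiset.card s :=
          mul_le_mul_of_nonneg_right hb h1
      _ ≤ b * s.prod := mul_le_mul_of_nonneg_left hs (ha.trans hb)

lemma root_norm_le {F : ℂ[X]} (hF : F ≠ 0) {z : ℂ} (hz : F.IsRoot z) :
    ‖z‖ ≤ 1 + (∑ i ∈ range F.natDegree, ‖F.coeff i‖) / ‖F.leadingCoeff‖ := by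
  set d := F.natDegree with hd
  have hlc : 0 < ‖F.leadingCoeff‖ := norm_pos_iff.mpr (leadingCoeff_ne_zero.mpr hF)
  by_cases h1 : ‖z‖ ≤ 1
  · have h2 : 0 ≤ (∑ i ∈ range d, ‖F.coeff i‖) / ‖F.leadingCoeff‖ :=
      div_nonneg (Finset.sum_nonneg fun i _ => norm_nonneg _) (norm_nonneg _)
    linarith
  push_neg at h1
  have hd0 : d ≠ 0 := by
    intro h0
    have hC : F = Polynomial.C (F.coeff 0) := eq_C_of_natDegree_eq_zero h0
    have hc0 : F.coeff 0 = 0 := by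
      have h2 := hz
      rw [IsRoot, hC, eval_C] at h2
      exact h2
    exact hF (by rw [hC, hc0, map_zero])
  have hsum : ∑ i ∈ range d, F.coeff i * z ^ i + F.coeff d * z ^ d = 0 := by
    rw [← Finset.sum_range_succ]
    exact (Polynomial.eval_eq_sum_range z).symm.trans hz
  have hsum' : F.coeff d * z ^ d = -∑ i ∈ range d, F.coeff i * z ^ i := by
    linear_combination hsum
  have hnorm : ‖F.leadingCoeff‖ * ‖z‖ ^ d ≤ ∑ i ∈ range d, ‖F.coeff i‖ * ‖z‖ ^ i := by
    rw [Polynomial.leadingCoeff, ← hd]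
    calc ‖F.coeff d‖ * ‖z‖ ^ d = ‖F.coeff d * z ^ d‖ := by rw [norm_mul, norm_pow]
      _ = ‖∑ i ∈ range d, F.coeff i * z ^ i‖ := by rw [hsum', norm_neg]
      _ ≤ ∑ i ∈ range d, ‖F.coeff i * z ^ i‖ := norm_sum_le _ _
      _ = ∑ i ∈ range d, ‖F.coeff i‖ * ‖z‖ ^ i := by
          refine Finset.sum_congr rfl fun i _ => ?_
          rw [norm_mul, norm_pow]
  have h2 : ‖F.leadingCoeff‖ * ‖z‖ ^ d ≤ (∑ i ∈ range d, ‖F.coeff i‖) * ‖z‖ ^ (d - 1) := by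
    rw [Finset.sum_mul]
    refine hnorm.trans (Finset.sum_le_sum fun i hi => ?_)
    refine mul_le_mul_of_nonneg_left ?_ (norm_nonneg _)
    exact pow_le_pow_right₀ h1.le (by rw [Finset.mem_range] at hi; omega)
  have hzpos : (0:ℝ) < ‖z‖ ^ (d - 1) := pow_pos (lt_trans one_pos h1) _
  have hdd : ‖z‖ ^ d = ‖z‖ ^ (d - 1) * ‖z‖ := by
    rw [← pow_succ]
    congr 1
    omega
  rw [hdd] at h2
  have h3 : ‖F.leadingCoeff‖ * ‖z‖ ≤ ∑ i ∈ range d, ‖F.coeff i‖ := by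
    nlinarith
  have h4 : ‖z‖ ≤ (∑ i ∈ range d, ‖F.coeff i‖) / ‖F.leadingCoeff‖ := by
    rw [le_div_iff₀ hlc]
    nlinarith
  linarith

lemma exists_root_near {F : ℂ[X]} (hd : F.natDegree ≠ 0) (r : ℂ) :
    ∃ z ∈ F.roots, ‖r - z‖ ^ F.natDegree ≤ ‖F.eval r‖ / ‖F.leadingCoeff‖ := by
  have hF : F ≠ 0 := fun h => hd (by simp [h])
  have hlc : 0 < ‖F.leadingCoeff‖ := norm_pos_iff.mpr (leadingCoeff_ne_zero.mpr hF)
  have hcard : Multiset.card F.roots = F.natDegree :=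
    splits_iff_card_roots.mp (IsAlgClosed.splits F)
  have hroots_ne : F.roots ≠ 0 := by
    intro h
    rw [h] at hcard
    simp only [Multiset.card_zero] at hcard
    exact hd hcard.symm
  obtain ⟨z, hz, hmin⟩ : ∃ z ∈ F.roots, ∀ w ∈ F.roots, ‖r - z‖ ≤ ‖r - w‖ := by
    obtain ⟨z, hz1, hz2⟩ := Finset.exists_min_image F.roots.toFinset (fun w => ‖r - w‖)
      (by rwa [Multiset.toFinset_nonempty])
    exact ⟨z, Multiset.mem_toFinset.mp hz1, fun w hw => hz2 w (Multiset.mem_toFinset.mpr hw)⟩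
  refine ⟨z, hz, ?_⟩
  have hfact := C_leadingCoeff_mul_prod_multiset_X_sub_C (p := F) hcard
  have heval : ‖F.eval r‖ = ‖F.leadingCoeff‖ * ((F.roots.map fun w => ‖r - w‖).prod) := by
    conv_lhs => rw [← hfact]
    rw [eval_mul, eval_C, norm_mul]
    congr 1
    rw [eval_multiset_prod, Multiset.map_map, norm_multiset_prod', Multiset.map_map]
    congr 1
    refine Multiset.map_congr rfl fun w _ => ?_
    simp [norm_sub_rev]
  have hprod : ‖r - z‖ ^ F.natDegree ≤ (F.roots.map fun w => ‖r - w‖).prod := by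
    have := pow_card_le_prod_multiset (F.roots.map fun w => ‖r - w‖) ‖r - z‖ (norm_nonneg _)
      (fun x hx => by
        rw [Multiset.mem_map] at hx
        obtain ⟨w, hw, hwx⟩ := hx
        rw [← hwx]
        exact hmin w hw)
    rwa [Multiset.card_map, hcard] at this
  rw [heval, mul_comm, mul_div_assoc, div_self (ne_of_gt hlc), mul_one]
  exact hprod

/-- The key homotopy lemma: along a continuous family of polynomials of constant
degree whose roots never meet the frontier of an open set `U`, if all roots
start in `U` they end in `U`. -/
lemma master {F : ℝ → ℂ[X]} {K : ℕ} (hK : K ≠ 0)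
    (hcont : ∀ i, Continuous fun θ : ℝ => (F θ).coeff i)
    (hdeg : ∀ θ ∈ Set.Icc (0:ℝ) 1, (F θ).natDegree ≤ K)
    (hlead : ∀ θ ∈ Set.Icc (0:ℝ) 1, (F θ).coeff K ≠ 0)
    {U : Set ℂ} (hU : IsOpen U)
    (hbar : ∀ θ ∈ Set.Icc (0:ℝ) 1, ∀ z ∈ (F θ).roots, z ∉ frontier U)
    (h0 : ∀ z ∈ (F 0).roots, z ∈ U) :
    ∀ z ∈ (F 1).roots, z ∈ U := by
  have hdeq : ∀ θ ∈ Set.Icc (0:ℝ) 1, (F θ).natDegree = K := fun θ hθ =>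
    le_antisymm (hdeg θ hθ) (le_natDegree_of_ne_zero (hlead θ hθ))
  have hFne : ∀ θ ∈ Set.Icc (0:ℝ) 1, F θ ≠ 0 := by
    intro θ hθ h
    exact hlead θ hθ (by rw [h]; simp)
  -- joint continuity of evaluation
  have hev : ∀ (θs : ℕ → ℝ) (θ : ℝ), (∀ m, θs m ∈ Set.Icc (0:ℝ) 1) → θ ∈ Set.Icc (0:ℝ) 1 →
      Filter.Tendsto θs Filter.atTop (nhds θ) →
      ∀ (zs : ℕ → ℂ) (z : ℂ), Filter.Tendsto zs Filter.atTop (nhds z) →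
      Filter.Tendsto (fun m => (F (θs m)).eval (zs m)) Filter.atTop
        (nhds ((F θ).eval z)) := by
    intro θs θ hθs hθ htend zs z hzs
    have hrw : ∀ m, (F (θs m)).eval (zs m) =
        ∑ i ∈ range (K + 1), (F (θs m)).coeff i * (zs m) ^ i := fun m =>
      eval_eq_sum_range' (by rw [hdeq _ (hθs m)]; omega) _
    have hrw2 : (F θ).eval z = ∑ i ∈ range (K + 1), (F θ).coeff i * z ^ i :=
      eval_eq_sum_range' (by rw [hdeq _ hθ]; omega) _
    simp only [hrw, hrw2]
    refine tendsto_finset_sum _ fun i _ => Filter.Tendsto.mul ?_ (hzs.pow i)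
    exact ((hcont i).tendsto θ).comp htend
  -- the bad set is closed
  set S : Set ℝ := {θ | θ ∈ Set.Icc (0:ℝ) 1 ∧ ∃ z ∈ (F θ).roots, z ∈ (closure U)ᶜ} with hSdef
  have hbad_of_not : ∀ θ ∈ Set.Icc (0:ℝ) 1, ¬ (∀ z ∈ (F θ).roots, z ∈ U) → θ ∈ S := by
    intro θ hθ hnot
    push_neg at hnot
    obtain ⟨z, hzr, hzU⟩ := hnot
    refine ⟨hθ, z, hzr, ?_⟩
    intro hcl
    have : z ∈ frontier U := by
      rw [frontier, hU.interior_eq]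
      exact ⟨hcl, hzU⟩
    exact hbar θ hθ z hzr this
  have hSclosed : IsClosed S := by
    rw [← isSeqClosed_iff_isClosed]
    intro θm θ hmem htend
    have hθIcc : θ ∈ Set.Icc (0:ℝ) 1 :=
      isClosed_Icc.mem_of_tendsto htend (Filter.Eventually.of_forall fun m => (hmem m).1)
    choose z hzr hzout using fun m => (hmem m).2
    -- bound the roots
    have hroot_bound : ∀ m, ‖z m‖ ≤ 1 +
        (∑ i ∈ range K, ‖(F (θm m)).coeff i‖) / ‖(F (θm m)).coeff K‖ := by
      intro m
      have h := root_norm_le (hFne _ (hmem m).1) (isRoot_of_mem_roots (hzr m))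
      rwa [Polynomial.leadingCoeff, hdeq _ (hmem m).1] at h
    have hBtend : Filter.Tendsto
        (fun m => 1 + (∑ i ∈ range K, ‖(F (θm m)).coeff i‖) / ‖(F (θm m)).coeff K‖)
        Filter.atTop (nhds (1 + (∑ i ∈ range K, ‖(F θ).coeff i‖) / ‖(F θ).coeff K‖)) := by
      refine Filter.Tendsto.const_add _ (Filter.Tendsto.div ?_ ?_ ?_)
      · exact tendsto_finset_sum _ fun i _ =>
          (((hcont i).tendsto θ).comp htend).norm
      · exact (((hcont K).tendsto θ).comp htend).norm
      · simpa using hlead θ hθIcc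
    obtain ⟨Cb, hCb⟩ := hBtend.bddAbove_range
    have hzbnd : ∀ m, z m ∈ Metric.closedBall (0:ℂ) Cb := by
      intro m
      rw [Metric.mem_closedBall, dist_zero_right]
      exact (hroot_bound m).trans (hCb ⟨m, rfl⟩)
    obtain ⟨x, _, φ, hφ, hxtend⟩ := tendsto_subseq_of_bounded
      (Metric.isBounded_closedBall (x := (0:ℂ)) (r := Cb)) hzbnd
    have hxroot : (F θ).eval x = 0 := by
      have h1 := hev (θm ∘ φ) θ (fun m => (hmem (φ m)).1) hθIcc
        (htend.comp hφ.tendsto_atTop) (z ∘ φ) x hxtend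
      have h2 : ∀ m, (F (θm (φ m))).eval (z (φ m)) = 0 := fun m =>
        isRoot_of_mem_roots (hzr (φ m))
      simp only [Function.comp_apply, h2] at h1
      exact tendsto_nhds_unique h1 tendsto_const_nhds
    have hxout : x ∉ U := by
      have hxcl : x ∈ closure ((closure U)ᶜ) :=
        mem_closure_of_tendsto hxtend (Filter.Eventually.of_forall fun m => hzout (φ m))
      have hsub : closure ((closure U)ᶜ) ⊆ Uᶜ :=
        closure_minimal (Set.compl_subset_compl.mpr subset_closure) hU.isClosed_compl
      exact hsub hxcl
    refine hbad_of_not θ hθIcc ?_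
    intro hall
    have hxr : x ∈ (F θ).roots := by
      rw [mem_roots (hFne θ hθIcc)]
      exact hxroot
    exact hxout (hall x hxr)
  -- conclude
  by_contra hcon
  push_neg at hcon
  obtain ⟨zf, hzfr, hzfU⟩ := hcon
  have h1S : (1:ℝ) ∈ S := hbad_of_not 1 ⟨zero_le_one, le_rfl⟩ (by
    push_neg
    exact ⟨zf, hzfr, hzfU⟩)
  have hSne : S.Nonempty := ⟨1, h1S⟩
  have hSbdd : BddBelow S := ⟨0, fun x hx => hx.1.1⟩
  set θ₀ := sInf S with hθ₀def
  have hθ₀S : θ₀ ∈ S := hSclosed.csInf_mem hSne hSbdd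
  have hθ₀Icc : θ₀ ∈ Set.Icc (0:ℝ) 1 := hθ₀S.1
  have hθ₀pos : 0 < θ₀ := by
    rcases lt_or_eq_of_le hθ₀Icc.1 with h | h
    · exact h
    · exfalso
      obtain ⟨z, hzr, hzout⟩ := hθ₀S.2
      rw [← h] at hzr
      exact hzout (subset_closure (h0 z hzr))
  have hgood : ∀ θ, 0 ≤ θ → θ < θ₀ → ∀ z ∈ (F θ).roots, z ∈ U := by
    intro θ hθ0 hθlt
    by_contra hbad
    have hmem : θ ∈ S := hbad_of_not θ ⟨hθ0, le_trans hθlt.le hθ₀Icc.2⟩ (by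
      intro hall
      exact hbad hall)
    exact absurd (csInf_le hSbdd hmem) (not_le.mpr hθlt)
  obtain ⟨zs, hzsr, hzsout⟩ := hθ₀S.2
  -- approach θ₀ from below
  set θseq : ℕ → ℝ := fun m => θ₀ - θ₀ / (m + 2) with hθseq
  have hθseqIcc : ∀ m, 0 ≤ θseq m ∧ θseq m < θ₀ := by
    intro m
    have h2 : (0:ℝ) < (m:ℝ) + 2 := by positivity
    have h3 : θ₀ / ((m:ℝ) + 2) ≤ θ₀ / 1 := by
      apply div_le_div_of_nonneg_left hθ₀pos.le ?_ ?_ <;> linarith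
    have h4 : 0 < θ₀ / ((m:ℝ) + 2) := by positivity
    constructor
    · simp only [hθseq]
      rw [div_one] at h3
      linarith
    · simp only [hθseq]
      linarith
  have hθseqtend : Filter.Tendsto θseq Filter.atTop (nhds θ₀) := by
    have h1 : Filter.Tendsto (fun m : ℕ => θ₀ / (m + 2)) Filter.atTop (nhds 0) := by
      apply Filter.Tendsto.div_atTop (tendsto_const_nhds)
      have := tendsto_natCast_atTop_atTop (R := ℝ)
      exact Filter.tendsto_atTop_add_const_right _ 2 this
    have := Filter.Tendsto.const_sub θ₀ h1
    simpa using this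
  have hevtend : Filter.Tendsto (fun m => (F (θseq m)).eval zs) Filter.atTop (nhds 0) := by
    have h1 := hev θseq θ₀ (fun m => ⟨(hθseqIcc m).1, ((hθseqIcc m).2.le.trans hθ₀Icc.2)⟩)
      hθ₀Icc hθseqtend (fun _ => zs) zs tendsto_const_nhds
    rwa [show (F θ₀).eval zs = 0 from isRoot_of_mem_roots hzsr] at h1
  -- eventually there are roots of F (θseq m) near zs
  have hL : 0 < ‖(F θ₀).coeff K‖ := by simpa using hlead θ₀ hθ₀Icc
  have hleadtend : Filter.Tendsto (fun m => ‖(F (θseq m)).coeff K‖) Filter.atTop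
      (nhds ‖(F θ₀).coeff K‖) := (((hcont K).tendsto θ₀).comp hθseqtend).norm
  have hrootsnear : ∀ m, ∃ w ∈ (F (θseq m)).roots,
      ‖zs - w‖ ^ K ≤ ‖(F (θseq m)).eval zs‖ / ‖(F (θseq m)).coeff K‖ := by
    intro m
    have hIc : θseq m ∈ Set.Icc (0:ℝ) 1 :=
      ⟨(hθseqIcc m).1, ((hθseqIcc m).2.le.trans hθ₀Icc.2)⟩
    have hdm : (F (θseq m)).natDegree ≠ 0 := by rw [hdeq _ hIc]; exact hK
    obtain ⟨w, hw, hle⟩ := exists_root_near hdm zs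
    rw [Polynomial.leadingCoeff, hdeq _ hIc] at hle
    exact ⟨w, hw, hle⟩
  choose w hwroot hwnear using hrootsnear
  have hwU : ∀ m, w m ∈ U := fun m => hgood _ (hθseqIcc m).1 (hθseqIcc m).2 _ (hwroot m)
  have hquot : Filter.Tendsto
      (fun m => ‖(F (θseq m)).eval zs‖ / ‖(F (θseq m)).coeff K‖) Filter.atTop (nhds 0) := by
    have h1 := Filter.Tendsto.div hevtend.norm hleadtend (ne_of_gt hL)
    rw [norm_zero, zero_div] at h1
    exact h1
  have hwtend : Filter.Tendsto w Filter.atTop (nhds zs) := by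
    rw [Metric.tendsto_atTop]
    intro ε hε
    have hεK : 0 < ε ^ K := by positivity
    obtain ⟨N, hN⟩ := Filter.eventually_atTop.mp (hquot.eventually (eventually_lt_nhds hεK))
    refine ⟨N, fun m hm => ?_⟩
    have h1 : ‖zs - w m‖ ^ K < ε ^ K := lt_of_le_of_lt (hwnear m) (hN m hm)
    have h2 : ‖zs - w m‖ < ε := by
      by_contra hge
      push_neg at hge
      exact absurd h1 (not_lt.mpr (pow_le_pow_left₀ hε.le hge K))
    rw [dist_eq_norm, norm_sub_rev]
    exact h2
  exact hzsout (mem_closure_of_tendsto hwtend (Filter.Eventually.of_forall hwU))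

end GammaAux
namespace GammaAux

open Polynomial

variable {n k : ℕ} (lam mu : Fin n → ℝ)

/-- all coefficients continuous in the parameter -/
def CCoeff (g : ℝ → ℂ[X]) : Prop := ∀ i : ℕ, Continuous fun θ : ℝ => (g θ).coeff i

lemma CCoeff_const (p : ℂ[X]) : CCoeff fun _ => p := fun _ => continuous_const

lemma CCoeff_C {u : ℝ → ℂ} (hu : Continuous u) : CCoeff fun θ => Polynomial.C (u θ) := by
  intro i
  simp only [coeff_C]
  by_cases h : i = 0
  · simpa [h] using hu
  · simp only [h, if_false]
    exact continuous_const

lemma CCoeff.add {g h : ℝ → ℂ[X]} (hg : CCoeff g) (hh : CCoeff h) :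
    CCoeff fun θ => g θ + h θ := fun i => by
  simp only [coeff_add]
  exact (hg i).add (hh i)

lemma CCoeff.mul {g h : ℝ → ℂ[X]} (hg : CCoeff g) (hh : CCoeff h) :
    CCoeff fun θ => g θ * h θ := fun i => by
  simp only [coeff_mul]
  exact continuous_finset_sum _ fun p _ => (hg p.1).mul (hh p.2)

lemma CCoeff.pow {g : ℝ → ℂ[X]} (hg : CCoeff g) (m : ℕ) :
    CCoeff fun θ => (g θ) ^ m := by
  induction m with
  | zero => simpa using CCoeff_const 1
  | succ m ih => simp only [pow_succ]; exact ih.mul hg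

lemma CCoeff.sum {ι : Type*} (s : Finset ι) (f : ι → ℝ → ℂ[X])
    (h : ∀ j ∈ s, CCoeff (f j)) : CCoeff fun θ => ∑ j ∈ s, f j θ := fun i => by
  simp only [finset_sum_coeff]
  exact continuous_finset_sum _ fun j hj => h j hj i

lemma CCoeff.prod {ι : Type*} (s : Finset ι) (f : ι → ℝ → ℂ[X])
    (h : ∀ j ∈ s, CCoeff (f j)) : CCoeff fun θ => ∏ j ∈ s, f j θ := by
  classical
  induction s using Finset.induction_on with
  | empty => simpa using CCoeff_const 1
  | @insert a s ha ih =>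
    have := (h a (Finset.mem_insert_self a s)).mul
      (ih fun j hj => h j (Finset.mem_insert_of_mem hj))
    intro i
    simpa [Finset.prod_insert ha] using this i

lemma CCoeff_fm {a b c d e f : ℝ → ℂ} (ha : Continuous a) (hb : Continuous b)
    (hc : Continuous c) (hd : Continuous d) (he : Continuous e) (hf : Continuous f) :
    CCoeff fun θ => fm n k lam mu (a θ) (b θ) (c θ) (d θ) (e θ) (f θ) := by
  unfold fm
  refine CCoeff.sum _ _ fun j _ => ?_
  refine (CCoeff.mul (CCoeff.mul (CCoeff_const _) ?_) ?_)
  · refine CCoeff.sum _ _ fun A _ => ?_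
    refine CCoeff.prod _ _ fun i _ => ?_
    refine CCoeff.add (CCoeff_C ?_) (CCoeff.mul (CCoeff_C ?_) (CCoeff_const X))
    · exact (hc.mul continuous_const).add (hb.mul continuous_const)
    · exact (hf.mul continuous_const).add (he.mul continuous_const)
  · refine CCoeff.pow ?_ _
    exact CCoeff.add (CCoeff_C ha) (CCoeff.mul (CCoeff_C hd) (CCoeff_const X))

variable (n k) in
/-- real-coefficient version of `fm` -/
def fmR (a b c d e f : ℝ) : ℝ[X] :=
  ∑ j ∈ range (k + 1), Polynomial.C ((cc n k j : ℝ)) *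
    (∑ A ∈ powersetCard j (univ : Finset (Fin n)), ∏ i ∈ A,
      (Polynomial.C (c * (lam i) + b * (mu i)) +
        Polynomial.C (f * (lam i) + e * (mu i)) * X)) *
    (Polynomial.C a + Polynomial.C d * X) ^ (k - j)

lemma fm_map (a b c d e f : ℝ) :
    (fmR n k lam mu a b c d e f).map (algebraMap ℝ ℂ) =
      fm n k lam mu (a : ℂ) (b : ℂ) (c : ℂ) (d : ℂ) (e : ℂ) (f : ℂ) := by
  unfold fmR fm
  simp only [Polynomial.map_sum, Polynomial.map_mul, Polynomial.map_pow, Polynomial.map_add,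
    Polynomial.map_prod, map_C, Polynomial.map_X, Complex.coe_algebraMap]
  refine Finset.sum_congr rfl fun j _ => ?_
  congr 2
  · refine Finset.sum_congr rfl fun A _ => Finset.prod_congr rfl fun i _ => ?_
    congr 2 <;> · push_cast; ring

lemma map_root_conj (p : ℝ[X]) {z : ℂ} (hz : (p.map (algebraMap ℝ ℂ)).eval z = 0) :
    (p.map (algebraMap ℝ ℂ)).eval ((starRingEnd ℂ) z) = 0 := by
  have hcomp : (starRingEnd ℂ).comp (algebraMap ℝ ℂ) = algebraMap ℝ ℂ :=
    RingHom.ext fun r => Complex.conj_ofReal r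
  calc (p.map (algebraMap ℝ ℂ)).eval ((starRingEnd ℂ) z)
      = p.eval₂ ((starRingEnd ℂ).comp (algebraMap ℝ ℂ)) ((starRingEnd ℂ) z) := by
        rw [Polynomial.eval_map, hcomp]
    _ = (starRingEnd ℂ) (p.eval₂ (algebraMap ℝ ℂ) z) := (Polynomial.hom_eval₂ _ _ _ _).symm
    _ = 0 := by rw [← Polynomial.eval_map, hz, map_zero]

lemma pf_continuous_a (b c : ℂ) : Continuous fun a => pf n k lam mu a b c := by
  unfold pf
  exact continuous_finset_sum _ fun j _ =>
    (continuous_const.mul continuous_const).mul (continuous_pow _)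

lemma pf_e_val : pf n k lam mu 1 0 0 = (cc n k 0 : ℂ) := by
  unfold pf
  rw [Finset.sum_eq_single 0]
  · simp [Ecx]
  · intro j hj hj0
    have hj1 : 1 ≤ j := Nat.one_le_iff_ne_zero.mpr hj0
    have : Ecx n lam mu j 0 0 = 0 := by
      unfold Ecx
      refine Finset.sum_eq_zero fun A hA => ?_
      rw [Finset.mem_powersetCard] at hA
      have hne : A.Nonempty := Finset.card_pos.mp (by omega)
      exact Finset.prod_eq_zero hne.choose_spec (by ring)
    rw [this]
    ring
  · intro h
    exact absurd (Finset.mem_range.mpr (by omega)) h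

lemma pf_0bc (b c : ℂ) : pf n k lam mu 0 b c = (cc n k k : ℂ) * Ecx n lam mu k b c := by
  unfold pf
  rw [Finset.sum_eq_single k]
  · simp
  · intro j hj hjk
    rw [Finset.mem_range] at hj
    rw [zero_pow (by omega : k - j ≠ 0)]
    ring
  · intro h
    exact absurd (Finset.mem_range.mpr (by omega)) h

end GammaAux
namespace GammaAux

open Polynomial

variable {n k : ℕ} (lam mu : Fin n → ℝ)

lemma frontier_lt_subset (f : ℂ → ℝ) (hf : Continuous f) :
    frontier {z : ℂ | f z < 0} ⊆ {z : ℂ | f z = 0} := by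
  intro z hz
  have hop : IsOpen {z : ℂ | f z < 0} := isOpen_lt hf continuous_const
  rw [frontier, hop.interior_eq] at hz
  have h1 : closure {z : ℂ | f z < 0} ⊆ {z : ℂ | f z ≤ 0} :=
    closure_minimal (fun w hw => show f w ≤ 0 from le_of_lt hw)
      (isClosed_le hf continuous_const)
  exact le_antisymm (h1 hz.1) (not_lt.mp hz.2)

lemma tendsto_of_pow_dist {w : ℕ → ℂ} {z : ℂ} {K : ℕ} (hK : K ≠ 0) {q : ℕ → ℝ}
    (hq : Filter.Tendsto q Filter.atTop (nhds 0))
    (hle : ∀ m, ‖z - w m‖ ^ K ≤ q m) :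
    Filter.Tendsto w Filter.atTop (nhds z) := by
  rw [Metric.tendsto_atTop]
  intro ε hε
  have hεK : 0 < ε ^ K := by positivity
  obtain ⟨N, hN⟩ := Filter.eventually_atTop.mp (hq.eventually (eventually_lt_nhds hεK))
  refine ⟨N, fun m hm => ?_⟩
  have h1 : ‖z - w m‖ ^ K < ε ^ K := lt_of_le_of_lt (hle m) (hN m hm)
  have h2 : ‖z - w m‖ < ε := by
    by_contra hge
    push_neg at hge
    exact absurd h1 (not_lt.mpr (pow_le_pow_left₀ hε.le hge K))
  rw [dist_eq_norm, norm_sub_rev]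
  exact h2

lemma pf_y_val (hk1 : 1 ≤ k) : pf n k lam mu 0 1 0 =
    ((cc n k k : ℝ) * esymm n k mu : ℝ) := by
  rw [pf_0bc, show (1:ℂ) = ((1:ℝ):ℂ) from by norm_num,
    show (0:ℂ) = ((0:ℝ):ℂ) from by norm_num, Ecx_real]
  have h : (0:ℝ) • lam + (1:ℝ) • mu = mu := by simp
  rw [h]
  push_cast
  ring

lemma pf_y_ne (hk1 : 1 ≤ k) (hkn : k ≤ n)
    (hmu : ∀ j, 1 ≤ j → j ≤ k → 0 < esymm n j mu) : pf n k lam mu 0 1 0 ≠ 0 := by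
  rw [pf_y_val lam mu hk1]
  have h1 : (0:ℝ) < cc n k k := by exact_mod_cast cc_pos hkn le_rfl
  have h2 := hmu k hk1 le_rfl
  have : (0:ℝ) < (cc n k k : ℝ) * esymm n k mu := by positivity
  exact_mod_cast this.ne'

/-- Step 1: roots of the shifted family in direction `μ` lie in the lower half plane. -/
lemma step1 (hk1 : 1 ≤ k) (hkn : k ≤ n)
    (hmu : ∀ j, 1 ≤ j → j ≤ k → 0 < esymm n j mu)
    (u₁ u₂ u₃ : ℝ) {s : ℝ} (hs : 0 < s) :
    ∀ z ∈ (fm n k lam mu ((u₁ : ℂ) + (s : ℂ) * Complex.I) (u₂ : ℂ) (u₃ : ℂ) 0 1 0).roots,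
      z.im < 0 := by
  have hmu' : (0:ℝ) • lam + (1:ℝ) • mu = mu := by simp
  set F : ℝ → ℂ[X] := fun θ =>
    fm n k lam mu ((u₁ : ℂ) + (s : ℂ) * Complex.I) (u₂ : ℂ) (u₃ : ℂ)
      (1 - (θ : ℂ)) (θ : ℂ) 0 with hF
  have key := master (F := F) (K := k) (U := {z : ℂ | z.im < 0}) (by omega)
    (CCoeff_fm lam mu continuous_const continuous_const continuous_const
      (continuous_const.sub Complex.continuous_ofReal) Complex.continuous_ofReal
      continuous_const)
    (fun θ _ => fm_natDegree_le lam mu _ _ _ _ _ _)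
    ?hlead (isOpen_lt Complex.continuous_im continuous_const) ?hbar ?h0
  case hlead =>
    intro θ hθ
    show (fm n k lam mu _ _ _ _ _ _).coeff k ≠ 0
    rw [fm_coeff_k]
    rcases eq_or_lt_of_le hθ.1 with h | h
    · rw [← h]
      rw [show (1 - ((0:ℝ):ℂ)) = 1 from by norm_num, show ((0:ℝ):ℂ) = 0 from by norm_num,
        pf_e_val]
      have := cc_pos (n := n) hkn (by omega : 0 ≤ k)
      exact_mod_cast this.ne'
    · have heq := pf_smul lam mu hkn (θ:ℂ) (((1-θ)/θ : ℝ):ℂ) 1 0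
      have hθC : ((θ:ℝ):ℂ) ≠ 0 := by exact_mod_cast h.ne'
      have e1 : (θ:ℂ) * (((1-θ)/θ : ℝ):ℂ) = 1 - (θ:ℂ) := by
        push_cast
        field_simp
      rw [e1, mul_one, mul_zero] at heq
      rw [heq]
      refine mul_ne_zero (pow_ne_zero _ hθC) ?_
      have h10 := pf_real lam mu hk1 hkn ((1-θ)/θ) 1 0
      rw [show ((1:ℝ):ℂ) = 1 from by norm_num, show ((0:ℝ):ℂ) = 0 from by norm_num] at h10
      rw [h10, hmu']
      have hval := eval_Rp_pos_of_strict hk1 hkn mu hmu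
        (t := (1-θ)/θ) (div_nonneg (by linarith [hθ.2]) h.le)
      exact_mod_cast hval.ne'
  case hbar =>
    intro θ hθ z hz hfr
    have hzim : z.im = 0 := frontier_lt_subset _ Complex.continuous_im hfr
    have hev : (F θ).eval z = 0 := isRoot_of_mem_roots hz
    rw [hF] at hev
    simp only at hev
    rw [fm_eval] at hev
    have hzeq : z = ((z.re : ℝ) : ℂ) := by
      rw [← Complex.re_add_im z, hzim]
      simp
    rw [hzeq] at hev
    have e1 : ((u₁:ℂ) + (s:ℂ)*Complex.I + ((z.re:ℝ):ℂ) * (1 - (θ:ℂ))) =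
        ((u₁ + z.re*(1-θ) : ℝ) : ℂ) + ((s:ℝ):ℂ)*Complex.I := by push_cast; ring
    have e2 : ((u₂:ℂ) + ((z.re:ℝ):ℂ) * (θ:ℂ)) = ((u₂ + z.re*θ : ℝ):ℂ) := by push_cast; ring
    have e3 : ((u₃:ℂ) + ((z.re:ℝ):ℂ) * 0) = ((u₃:ℝ):ℂ) := by push_cast; ring
    rw [e1, e2, e3] at hev
    refine pf_ne_zero_of_im lam mu hk1 hkn _ _ ?_ hev
    simp [hs.ne']
  case h0 =>
    intro z hz
    have hev : (F 0).eval z = 0 := isRoot_of_mem_roots hz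
    rw [hF] at hev
    simp only at hev
    rw [fm_eval] at hev
    have e1 : ((u₁:ℂ) + (s:ℂ)*Complex.I + z * (1 - ((0:ℝ):ℂ))) =
        ((u₁:ℂ) + z) + (s:ℂ)*Complex.I := by push_cast; ring
    have e2 : ((u₂:ℂ) + z * ((0:ℝ):ℂ)) = ((u₂:ℝ):ℂ) := by push_cast; ring
    have e3 : ((u₃:ℂ) + z * 0) = ((u₃:ℝ):ℂ) := by push_cast; ring
    rw [e1, e2, e3] at hev
    have him := pf_root_real lam mu hk1 hkn u₂ u₃ hev
    simp only [Complex.add_im, Complex.ofReal_im, Complex.mul_im, Complex.I_im,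
      Complex.ofReal_re, Complex.I_re, mul_zero, mul_one, zero_add] at him
    show z.im < 0
    have : z.im = -s := by linarith
    rw [this]
    linarith
  intro z hz
  have hF1 : F 1 = fm n k lam mu ((u₁ : ℂ) + (s : ℂ) * Complex.I) (u₂ : ℂ) (u₃ : ℂ) 0 1 0 := by
    rw [hF]
    norm_num
  exact key z (hF1 ▸ hz)

/-- Step 2: the polynomial along direction `μ` through a real point has only real roots. -/
lemma step2 (hk1 : 1 ≤ k) (hkn : k ≤ n)
    (hmu : ∀ j, 1 ≤ j → j ≤ k → 0 < esymm n j mu) (u₁ u₂ u₃ : ℝ) :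
    ∀ z ∈ (fm n k lam mu (u₁:ℂ) (u₂:ℂ) (u₃:ℂ) 0 1 0).roots, z.im = 0 := by
  set G := fm n k lam mu (u₁:ℂ) (u₂:ℂ) (u₃:ℂ) 0 1 0 with hG
  have hlead : G.coeff k ≠ 0 := by
    rw [hG, fm_coeff_k]
    exact pf_y_ne lam mu hk1 hkn hmu
  have hGne : G ≠ 0 := fun h => hlead (by rw [h]; simp)
  have hGdeg : G.natDegree = k :=
    le_antisymm (fm_natDegree_le lam mu _ _ _ _ _ _) (le_natDegree_of_ne_zero hlead)
  have him_le : ∀ z ∈ G.roots, z.im ≤ 0 := by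
    intro z hz
    set Gm : ℕ → ℂ[X] := fun m =>
      fm n k lam mu ((u₁:ℂ) + ((1/(m+1) : ℝ) : ℂ) * Complex.I) (u₂:ℂ) (u₃:ℂ) 0 1 0 with hGm
    have hGmlead : ∀ m, (Gm m).coeff k = pf n k lam mu 0 1 0 := fun m => by
      rw [hGm]
      exact fm_coeff_k lam mu _ _ _ _ _ _
    have hpfy : pf n k lam mu 0 1 0 ≠ 0 := pf_y_ne lam mu hk1 hkn hmu
    have hGmdeg : ∀ m, (Gm m).natDegree = k := fun m =>
      le_antisymm (by rw [hGm]; exact fm_natDegree_le lam mu _ _ _ _ _ _)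
        (le_natDegree_of_ne_zero (by rw [hGmlead]; exact hpfy))
    have hGmroots : ∀ m, ∀ x ∈ (Gm m).roots, x.im < 0 := fun m =>
      step1 lam mu hk1 hkn hmu u₁ u₂ u₃ (s := 1/(m+1)) (by positivity)
    have heval : ∀ m, (Gm m).eval z =
        pf n k lam mu ((u₁:ℂ) + ((1/(m+1):ℝ):ℂ) * Complex.I) ((u₂:ℂ) + z) (u₃:ℂ) := by
      intro m
      rw [hGm]
      simp only
      rw [fm_eval, mul_zero, add_zero, add_zero, mul_one]
    have h6 : pf n k lam mu (u₁:ℂ) ((u₂:ℂ) + z) (u₃:ℂ) = 0 := by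
      have hr := isRoot_of_mem_roots hz
      rw [IsRoot, hG, fm_eval, mul_zero, add_zero, add_zero, mul_one] at hr
      exact hr
    have htend : Filter.Tendsto (fun m => (Gm m).eval z) Filter.atTop (nhds 0) := by
      simp only [heval]
      have h2 : Filter.Tendsto (fun m : ℕ => (1/(m+1) : ℝ)) Filter.atTop (nhds 0) := by
        simpa using tendsto_one_div_add_atTop_nhds_zero_nat (𝕜 := ℝ)
      have h3 : Filter.Tendsto (fun m : ℕ => ((1/(m+1):ℝ):ℂ)) Filter.atTop (nhds 0) := by
        rw [show (0:ℂ) = ((0:ℝ):ℂ) from by norm_num]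
        exact (Complex.continuous_ofReal.tendsto 0).comp h2
      have h1 : Filter.Tendsto (fun m : ℕ => (u₁:ℂ) + ((1/(m+1):ℝ):ℂ) * Complex.I)
          Filter.atTop (nhds (u₁:ℂ)) := by
        have := tendsto_const_nhds (x := (u₁:ℂ)) (f := Filter.atTop (α := ℕ))
        simpa using this.add (h3.mul_const Complex.I)
      have h5 := ((pf_continuous_a (n := n) (k := k) lam mu ((u₂:ℂ) + z) (u₃:ℂ)).tendsto
        ((u₁:ℝ):ℂ)).comp h1
      rw [h6] at h5
      exact h5
    have hnear : ∀ m, ∃ x ∈ (Gm m).roots,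
        ‖z - x‖ ^ k ≤ ‖(Gm m).eval z‖ / ‖pf n k lam mu 0 1 0‖ := by
      intro m
      have hdm : (Gm m).natDegree ≠ 0 := by rw [hGmdeg]; omega
      obtain ⟨x, hx, hle⟩ := exists_root_near hdm z
      rw [Polynomial.leadingCoeff, hGmdeg, hGmlead] at hle
      exact ⟨x, hx, hle⟩
    choose w hwroot hwnear using hnear
    have hwim : ∀ m, (w m).im < 0 := fun m => hGmroots m _ (hwroot m)
    have hquot : Filter.Tendsto (fun m => ‖(Gm m).eval z‖ / ‖pf n k lam mu 0 1 0‖)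
        Filter.atTop (nhds 0) := by
      have := htend.norm.div_const ‖pf n k lam mu 0 1 0‖
      simpa using this
    have hwtend : Filter.Tendsto w Filter.atTop (nhds z) :=
      tendsto_of_pow_dist (by omega : k ≠ 0) hquot hwnear
    have himtend : Filter.Tendsto (fun m => (w m).im) Filter.atTop (nhds z.im) :=
      (Complex.continuous_im.tendsto z).comp hwtend
    exact le_of_tendsto himtend (Filter.Eventually.of_forall fun m => (hwim m).le)
  have hconj : ∀ z ∈ G.roots, (starRingEnd ℂ) z ∈ G.roots := by
    intro z hz
    have hmap : (fmR n k lam mu u₁ u₂ u₃ 0 1 0).map (algebraMap ℝ ℂ) = G := by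
      rw [hG, fm_map]
      norm_num
    have hzr : ((fmR n k lam mu u₁ u₂ u₃ 0 1 0).map (algebraMap ℝ ℂ)).eval z = 0 := by
      rw [hmap]
      exact isRoot_of_mem_roots hz
    have := map_root_conj _ hzr
    rw [hmap] at this
    rw [mem_roots hGne]
    exact this
  intro z hz
  have h1 := him_le z hz
  have h2 := him_le _ (hconj z hz)
  rw [Complex.conj_im] at h2
  linarith

end GammaAux
namespace GammaAux

open Polynomial

variable {n k : ℕ} (lam mu : Fin n → ℝ)

/-- Step 3: positivity along the segment, via a homotopy in the `λ`-slot. -/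
lemma step3 (hk1 : 1 ≤ k) (hkn : k ≤ n)
    (hlam : ∀ j, 1 ≤ j → j ≤ k → 0 < esymm n j lam)
    (hmu : ∀ j, 1 ≤ j → j ≤ k → 0 < esymm n j mu) {t : ℝ} (ht : 0 < t) :
    pf n k lam mu (t:ℂ) 1 1 ≠ 0 := by
  set F : ℝ → ℂ[X] := fun η => fm n k lam mu ((t:ℝ):ℂ) (((0:ℝ)):ℂ) ((η:ℝ):ℂ) 0 1 0 with hF
  have key := master (F := F) (K := k) (U := {z : ℂ | z.re < 0}) (by omega)
    (CCoeff_fm lam mu continuous_const continuous_const Complex.continuous_ofReal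
      continuous_const continuous_const continuous_const)
    (fun η _ => fm_natDegree_le lam mu _ _ _ _ _ _)
    ?hlead (isOpen_lt Complex.continuous_re continuous_const) ?hbar ?h0
  case hlead =>
    intro η _
    show (fm n k lam mu _ _ _ _ _ _).coeff k ≠ 0
    rw [fm_coeff_k]
    exact pf_y_ne lam mu hk1 hkn hmu
  case hbar =>
    intro η hη z hz hfr
    have hzre : z.re = 0 := frontier_lt_subset _ Complex.continuous_re hfr
    have hzim : z.im = 0 := step2 lam mu hk1 hkn hmu t 0 η z hz
    have hz0 : z = 0 := Complex.ext hzre hzim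
    have hev : (F η).eval z = 0 := isRoot_of_mem_roots hz
    rw [hF] at hev
    simp only at hev
    rw [fm_eval, hz0] at hev
    have e1 : ((t:ℝ):ℂ) + (0:ℂ) * 0 = ((t:ℝ):ℂ) := by ring
    have e2 : (((0:ℝ)):ℂ) + (0:ℂ) * 1 = (((0:ℝ)):ℂ) := by ring
    have e3 : ((η:ℝ):ℂ) + (0:ℂ) * 0 = ((η:ℝ):ℂ) := by ring
    rw [e1, e2, e3, pf_real lam mu hk1 hkn] at hev
    have hν : ∀ j, 1 ≤ j → j ≤ k → 0 ≤ esymm n j (η • lam + (0:ℝ) • mu) := by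
      intro j hj1 hjk
      have : η • lam + (0:ℝ) • mu = η • lam := by simp
      rw [this, esymm_smul]
      exact mul_nonneg (pow_nonneg hη.1 j) (hlam j hj1 hjk).le
    have hpos := eval_Rp_pos_of_nonneg hk1 hkn _ hν ht
    exact absurd (by exact_mod_cast hev : eval t (Rp n k (η • lam + (0:ℝ) • mu)) = 0) hpos.ne'
  case h0 =>
    intro z hz
    have hzim : z.im = 0 := step2 lam mu hk1 hkn hmu t 0 0 z hz
    show z.re < 0
    by_contra hge
    push_neg at hge
    have hev : (F 0).eval z = 0 := isRoot_of_mem_roots hz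
    rw [hF] at hev
    simp only at hev
    rw [fm_eval] at hev
    have hzeq : z = ((z.re : ℝ) : ℂ) := by
      rw [← Complex.re_add_im z, hzim]
      simp
    rw [hzeq] at hev
    have e1 : ((t:ℝ):ℂ) + ((z.re:ℝ):ℂ) * 0 = ((t:ℝ):ℂ) := by ring
    have e2 : (((0:ℝ)):ℂ) + ((z.re:ℝ):ℂ) * 1 = ((z.re:ℝ):ℂ) := by push_cast; ring
    have e3 : (((0:ℝ)):ℂ) + ((z.re:ℝ):ℂ) * 0 = (((0:ℝ)):ℂ) := by ring
    rw [e1, e2, e3, pf_real lam mu hk1 hkn] at hev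
    have hν : ∀ j, 1 ≤ j → j ≤ k → 0 ≤ esymm n j ((0:ℝ) • lam + z.re • mu) := by
      intro j hj1 hjk
      have : (0:ℝ) • lam + z.re • mu = z.re • mu := by simp
      rw [this, esymm_smul]
      exact mul_nonneg (pow_nonneg hge j) (hmu j hj1 hjk).le
    have hpos := eval_Rp_pos_of_nonneg hk1 hkn _ hν ht
    exact absurd (by exact_mod_cast hev : eval t (Rp n k ((0:ℝ) • lam + z.re • mu)) = 0) hpos.ne'
  -- conclude
  intro h0'
  have hF1ne : F 1 ≠ 0 := by
    intro h
    have : (F 1).coeff k ≠ 0 := by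
      rw [hF]
      simp only
      rw [fm_coeff_k]
      exact pf_y_ne lam mu hk1 hkn hmu
    rw [h] at this
    simp at this
  have hev1 : (F 1).eval 1 = 0 := by
    rw [hF]
    simp only
    rw [fm_eval]
    have e1 : ((t:ℝ):ℂ) + (1:ℂ) * 0 = (t:ℂ) := by ring
    have e2 : (((0:ℝ)):ℂ) + (1:ℂ) * 1 = 1 := by push_cast; ring
    have e3 : (((1:ℝ)):ℂ) + (1:ℂ) * 0 = 1 := by push_cast; ring
    rw [e1, e2, e3]
    exact h0'
  have hmem : (1:ℂ) ∈ (F 1).roots := by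
    rw [mem_roots hF1ne]
    exact hev1
  have hlt := key 1 hmem
  norm_num at hlt

lemma eval_Rp_sum_ne (hk1 : 1 ≤ k) (hkn : k ≤ n)
    (hlam : ∀ j, 1 ≤ j → j ≤ k → 0 < esymm n j lam)
    (hmu : ∀ j, 1 ≤ j → j ≤ k → 0 < esymm n j mu) {t : ℝ} (ht : 0 < t) :
    eval t (Rp n k (lam + mu)) ≠ 0 := by
  have h := step3 lam mu hk1 hkn hlam hmu ht
  intro h0
  apply h
  have h1 := pf_real lam mu hk1 hkn t 1 1
  rw [show ((1:ℝ):ℂ) = 1 from by norm_num] at h1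
  rw [h1]
  have h2 : (1:ℝ) • lam + (1:ℝ) • mu = lam + mu := by simp
  rw [h2, h0]
  norm_num

lemma multiset_prod_nonneg (s : Multiset ℝ) (h : ∀ x ∈ s, 0 ≤ x) : 0 ≤ s.prod := by
  induction s using Multiset.induction_on with
  | empty => simp
  | @cons a s ih =>
    rw [Multiset.prod_cons]
    exact mul_nonneg (h a (Multiset.mem_cons_self a s))
      (ih fun x hx => h x (Multiset.mem_cons_of_mem hx))

/-- main inequality, strict-interior version -/
lemma main_strict (hk1 : 1 ≤ k) (hkn : k ≤ n)
    (hlam : ∀ j, 1 ≤ j → j ≤ k → 0 < esymm n j lam)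
    (hmu : ∀ j, 1 ≤ j → j ≤ k → 0 < esymm n j mu) :
    ∀ j, 1 ≤ j → j ≤ k → 0 ≤ esymm n j (lam + mu) := by
  intro j hj1 hjk
  set P := Rp n k (lam + mu) with hP
  have hcard : Multiset.card P.roots = k := card_roots_Rp hkn _
  have hdeg : P.natDegree = k := natDegree_Rp hkn _
  have hroots_nonpos : ∀ r ∈ P.roots, r ≤ 0 := by
    intro r hr
    by_contra hpos
    push_neg at hpos
    exact eval_Rp_sum_ne lam mu hk1 hkn hlam hmu hpos (isRoot_of_mem_roots hr)
  have hfact := C_leadingCoeff_mul_prod_multiset_X_sub_C (p := P) (hcard.trans hdeg.symm)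
  have hco := coeff_Rp hkn (lam + mu) (show j ≤ k by omega)
  have hsub : Multiset.card P.roots - (k - j) = j := by omega
  have hcoeff2 : P.coeff (k - j) =
      P.leadingCoeff * ((-1:ℝ)^j * Multiset.esymm P.roots j) := by
    conv_lhs => rw [← hfact]
    rw [coeff_C_mul, Multiset.prod_X_sub_C_coeff P.roots (by omega : k - j ≤ Multiset.card P.roots)]
    rw [hsub]
  have hlc : 0 < P.leadingCoeff := by
    rw [Polynomial.leadingCoeff, hdeg]
    have h0 := coeff_Rp hkn (lam + mu) (show (0:ℕ) ≤ k by omega)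
    rw [Nat.sub_zero, esymm_zero_eq, mul_one] at h0
    rw [h0]
    exact_mod_cast cc_pos hkn (Nat.zero_le k)
  have hsign : 0 ≤ (-1:ℝ)^j * Multiset.esymm P.roots j := by
    rw [Multiset.esymm, ← Multiset.sum_map_mul_left]
    refine Multiset.sum_nonneg ?_
    intro x hx
    rw [Multiset.mem_map] at hx
    obtain ⟨tm, htm, rfl⟩ := hx
    rw [Multiset.mem_powersetCard] at htm
    have hneg : ((tm.map Neg.neg).prod) = (-1:ℝ)^j * tm.prod := by
      rw [Multiset.prod_map_neg, htm.2]
    rw [← hneg]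
    refine multiset_prod_nonneg _ fun x hx => ?_
    rw [Multiset.mem_map] at hx
    obtain ⟨y, hy, rfl⟩ := hx
    have : y ≤ 0 := hroots_nonpos y (Multiset.mem_of_le htm.1 hy)
    linarith
  have hfinal : 0 ≤ P.coeff (k - j) := by
    rw [hcoeff2]
    exact mul_nonneg hlc.le hsign
  rw [hco] at hfinal
  have hccj : (0:ℝ) < (cc n k j : ℝ) := by exact_mod_cast cc_pos hkn (by omega : j ≤ k)
  nlinarith [hfinal, hccj]

lemma W_shift (ν : Fin n → ℝ) (ε : ℝ) :
    W (ν + fun _ => ε) = Polynomial.taylor ε (W ν) := by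
  rw [taylor_apply]
  unfold W
  rw [Polynomial.prod_comp]
  refine Finset.prod_congr rfl fun i _ => ?_
  rw [add_comp, X_comp, C_comp]
  have h : (ν + fun _ => ε : Fin n → ℝ) i = ν i + ε := rfl
  rw [h, map_add]
  ring

lemma esymm_shift_pos (hk1 : 1 ≤ k) (hkn : k ≤ n) (ν : Fin n → ℝ)
    (hν : ∀ i, 1 ≤ i → i ≤ k → 0 ≤ esymm n i ν) {ε : ℝ} (hε : 0 < ε)
    {j : ℕ} (hj1 : 1 ≤ j) (hjk : j ≤ k) : 0 < esymm n j (ν + fun _ => ε) := by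
  have hjn : j ≤ n := le_trans hjk hkn
  have h1 : esymm n j (ν + fun _ => ε) = (Polynomial.taylor ε (W ν)).coeff (n - j) := by
    rw [← esymm_eq_coeff (ν + fun _ => ε) hjn, W_shift]
  rw [h1, Polynomial.taylor_coeff]
  set h := Polynomial.hasseDeriv (n - j) (W ν) with hh
  have hdeg : h.natDegree ≤ j := by
    have h2 := Polynomial.natDegree_hasseDeriv_le (W ν) (n - j)
    rw [natDegree_W] at h2
    rw [← hh] at h2
    omega
  rw [Polynomial.eval_eq_sum_range' (show h.natDegree < j + 1 by omega)]
  have hco : ∀ i, i ≤ j → h.coeff i =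
      ((i + (n - j)).choose (n - j) : ℝ) * esymm n (j - i) ν := by
    intro i hi
    rw [hh, Polynomial.hasseDeriv_coeff]
    have he : (W ν).coeff (i + (n - j)) = esymm n (j - i) ν := by
      have h2 : n - (j - i) = i + (n - j) := by omega
      rw [← h2]
      exact esymm_eq_coeff ν (by omega)
    rw [he]
  refine Finset.sum_pos' (fun i hi => ?_) ⟨j, Finset.self_mem_range_succ j, ?_⟩
  · rw [Finset.mem_range] at hi
    rw [hco i (by omega)]
    rcases Nat.eq_zero_or_pos (j - i) with h0 | hpos
    · rw [h0, esymm_zero_eq]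
      positivity
    · have := hν (j - i) hpos (by omega)
      positivity
  · rw [hco j le_rfl, Nat.sub_self, esymm_zero_eq, mul_one]
    have hch : 0 < (j + (n - j)).choose (n - j) := Nat.choose_pos (by omega)
    positivity

lemma gamma_closed : IsClosed (Gamma n k) := by
  have h : Gamma n k = ⋂ (j : ℕ) (_ : 1 ≤ j) (_ : j ≤ k), (esymm n j) ⁻¹' Set.Ici 0 := by
    ext ν
    simp only [Gamma, Set.mem_setOf_eq, Set.mem_iInter, Set.mem_preimage, Set.mem_Ici]
  rw [h]
  exact isClosed_iInter fun j => isClosed_iInter fun _ => isClosed_iInter fun _ =>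
    isClosed_Ici.preimage (continuous_esymm j)

lemma gamma_add (hk1 : 1 ≤ k) (hkn : k ≤ n) (hl : lam ∈ Gamma n k) (hm : mu ∈ Gamma n k) :
    lam + mu ∈ Gamma n k := by
  intro j hj1 hjk
  have key : ∀ m : ℕ, 0 ≤ esymm n j
      ((lam + fun _ => 1/((m:ℝ)+1)) + (mu + fun _ => 1/((m:ℝ)+1))) := by
    intro m
    have hε : 0 < 1/((m:ℝ)+1) := by positivity
    exact main_strict (lam + fun _ => 1/((m:ℝ)+1)) (mu + fun _ => 1/((m:ℝ)+1)) hk1 hkn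
      (fun i hi1 hik => esymm_shift_pos hk1 hkn lam hl hε hi1 hik)
      (fun i hi1 hik => esymm_shift_pos hk1 hkn mu hm hε hi1 hik) j hj1 hjk
  have htend : Filter.Tendsto (fun m : ℕ => esymm n j
      ((lam + fun _ => 1/((m:ℝ)+1)) + (mu + fun _ => 1/((m:ℝ)+1)))) Filter.atTop
      (nhds (esymm n j (lam + mu))) := by
    refine ((continuous_esymm (n := n) j).tendsto (lam + mu)).comp ?_
    rw [tendsto_pi_nhds]
    intro i
    have h2 : Filter.Tendsto (fun m : ℕ => 1/((m:ℝ)+1)) Filter.atTop (nhds 0) := by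
      simpa using tendsto_one_div_add_atTop_nhds_zero_nat (𝕜 := ℝ)
    have h3 := ((tendsto_const_nhds (x := lam i) (f := Filter.atTop)).add h2).add
      ((tendsto_const_nhds (x := mu i) (f := Filter.atTop)).add h2)
    simpa using h3
  exact ge_of_tendsto' htend key

end GammaAux

/-- `Γ_k` is a closed convex cone with vertex at the origin. -/
theorem gamma_k_closed_convex_cone (n k : ℕ) (hn : 1 ≤ n) (hk1 : 1 ≤ k) (hkn : k ≤ n) :
    IsClosed (Gamma n k) ∧
    ∀ lam ∈ Gamma n k, ∀ μ ∈ Gamma n k, ∀ s t : ℝ, 0 ≤ s → 0 ≤ t →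
      s • lam + t • μ ∈ Gamma n k := by
  constructor
  · exact GammaAux.gamma_closed
  · intro lam hlam μ hμ s t hs ht
    have hscale : ∀ (c : ℝ), 0 ≤ c → ∀ ν ∈ Gamma n k, c • ν ∈ Gamma n k := by
      intro c hc ν hν j hj1 hjk
      rw [GammaAux.esymm_smul]
      exact mul_nonneg (pow_nonneg hc j) (hν j hj1 hjk)
    exact GammaAux.gamma_add _ _ hk1 hkn (hscale s hs lam hlam) (hscale t ht μ hμ)
end
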